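/- For any N×N complex matrix W and any positive integer k, the k-frame potential of the conjugation family {D_{a,b} W D_{a,b}† : a,b ∈ {0,…,N−1}} reduces to a Fourier-type sum over coefficient magnitudes: (1/N⁴) Σ_{a,b,c,d=0}^{N−1} |tr( D_{a,b} W D_{a,b}† · (D_{c,d} W D_{c,d}†)† )|^{2k} = (1/N²) Σ_{a,b=0}^{N−1} | Σ_{j,n=0}^{N−1} p_{j,n} ω^{an − bj} |^{2k}, where p_{j,n} = |w_{j,n}|² and w_{j,n} = N^{−1/2} tr(D_{j,n}† W). -/

import Mathlib

open Matrix Complex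

noncomputable section

/-- `ω = exp(2πi/N)`. -/
def omegaN (N : ℕ) : ℂ := Complex.exp (2 * Real.pi * Complex.I / N)

/-- The shift matrix `X` with entries `X j k = 1` iff `j ≡ k+1 (mod N)`. -/
def shiftX (N : ℕ) : Matrix (Fin N) (Fin N) ℂ :=
  Matrix.of fun j k => if (j : ℕ) = ((k : ℕ) + 1) % N then 1 else 0

/-- The clock matrix `Z = diag(ω^j)`. -/
def clockZ (N : ℕ) : Matrix (Fin N) (Fin N) ℂ :=
  Matrix.diagonal fun j => omegaN N ^ (j : ℕ)


/-- The displacement operator `D_{j,k} = exp(-πi jk/N) • Z^j * X^k` for integers `j k`. -/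
def dispD (N : ℕ) (j k : ℤ) : Matrix (Fin N) (Fin N) ℂ :=
  Complex.exp (-(Real.pi * Complex.I * j * k) / N) • (clockZ N ^ j * shiftX N ^ k)

namespace FPaux
variable {N : ℕ}

lemma omega_ne (N : ℕ) : omegaN N ≠ 0 := Complex.exp_ne_zero _

lemma omega_zpow (N : ℕ) (m : ℤ) :
    omegaN N ^ m = Complex.exp ((m : ℂ) * (2 * Real.pi * Complex.I / N)) := by
  rw [Complex.exp_int_mul, omegaN]

lemma omega_pow_N (hN : 0 < N) : omegaN N ^ (N : ℤ) = 1 := by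
  rw [omega_zpow]
  have hNC : (N : ℂ) ≠ 0 := Nat.cast_ne_zero.mpr hN.ne'
  rw [show ((N : ℤ) : ℂ) * (2 * Real.pi * Complex.I / N) = 2 * Real.pi * Complex.I by
    push_cast; field_simp]
  exact Complex.exp_two_pi_mul_I

lemma omega_per (hN : 0 < N) {m m' : ℤ} (h : (N : ℤ) ∣ m - m') :
    omegaN N ^ m = omegaN N ^ m' := by
  obtain ⟨q, hq⟩ := h
  have hm : m = m' + N * q := by linarith
  rw [hm, zpow_add₀ (omega_ne N), _root_.zpow_mul, omega_pow_N hN, _root_.one_zpow, mul_one]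

lemma omega_zpow_eq_one_iff (hN : 0 < N) (m : ℤ) :
    omegaN N ^ m = 1 ↔ (N : ℤ) ∣ m := by
  constructor
  · intro h
    rw [omega_zpow, Complex.exp_eq_one_iff] at h
    obtain ⟨t, ht⟩ := h
    have hNC : (N : ℂ) ≠ 0 := Nat.cast_ne_zero.mpr hN.ne'
    have hpi : (2 * (Real.pi:ℂ) * Complex.I) ≠ 0 := by
      simp [Real.pi_ne_zero, Complex.I_ne_zero]
    have hmc : (m : ℂ) * (2 * (Real.pi:ℂ) * Complex.I) = ((t:ℂ) * N) * (2 * (Real.pi:ℂ) * Complex.I) := by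
      have := congrArg (· * (N:ℂ)) ht
      field_simp at this
      rw [this]; ring
    have : (m : ℂ) = (t : ℂ) * N := mul_right_cancel₀ hpi hmc
    have : (m : ℂ) = ((t * N : ℤ) : ℂ) := by push_cast; linear_combination this
    have hm : m = t * N := by exact_mod_cast this
    exact ⟨t, by rw [hm]; ring⟩
  · intro h
    have := omega_per hN (m := m) (m' := 0) (by simpa using h)
    simpa using this


lemma omega_inv (N : ℕ) : (starRingEnd ℂ) (omegaN N) = (omegaN N)⁻¹ := by
  rw [omegaN, ← Complex.exp_conj, ← Complex.exp_neg]
  congr 1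
  simp [map_div₀, Complex.conj_I, Complex.conj_ofNat]
  ring

lemma omega_conj (N : ℕ) (m : ℤ) :
    (starRingEnd ℂ) (omegaN N ^ m) = omegaN N ^ (-m) := by
  rw [map_zpow₀, omega_inv, _root_.inv_zpow, ← _root_.zpow_neg]

lemma omega_abs (N : ℕ) (m : ℤ) : Norm.norm (omegaN N ^ m) = 1 := by
  rw [norm_zpow, omegaN, Complex.norm_exp]
  have : (2 * (Real.pi:ℂ) * Complex.I / N).re = 0 := by
    simp [Complex.div_re]
  rw [this, Real.exp_zero, _root_.one_zpow]

lemma geom (hN : 0 < N) (m : ℤ) :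
    ∑ x : Fin N, omegaN N ^ (m * (x : ℕ)) = if (N : ℤ) ∣ m then (N : ℂ) else 0 := by
  have key : ∀ x : Fin N, omegaN N ^ (m * (x:ℕ)) = (omegaN N ^ m) ^ (x:ℕ) := by
    intro x
    rw [_root_.zpow_mul, ← zpow_natCast (omegaN N ^ m)]
  split_ifs with h
  · have h1 : omegaN N ^ m = 1 := (omega_zpow_eq_one_iff hN m).mpr h
    simp [key, h1]
  · have h1 : omegaN N ^ m ≠ 1 := fun hc => h ((omega_zpow_eq_one_iff hN m).mp hc)
    have h2 : (omegaN N ^ m) ^ N = 1 := by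
      rw [← zpow_natCast (omegaN N ^ m), ← _root_.zpow_mul, mul_comm,
        _root_.zpow_mul, omega_pow_N hN, _root_.one_zpow]
    calc ∑ x : Fin N, omegaN N ^ (m * (x:ℕ))
        = ∑ x ∈ Finset.range N, (omegaN N ^ m) ^ x := by
          simp only [key]; exact Fin.sum_univ_eq_sum_range _ N
      _ = ((omegaN N ^ m) ^ N - 1) / (omegaN N ^ m - 1) := geom_sum_eq h1 N
      _ = 0 := by rw [h2]; simp


def Umat (N : ℕ) (a b : ℕ) : Matrix (Fin N) (Fin N) ℂ := clockZ N ^ a * shiftX N ^ b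

lemma mod_dvd (t : ℕ) : (N : ℤ) ∣ ((t % N : ℕ) : ℤ) - (t : ℤ) := by
  rw [Int.natCast_mod, Int.emod_def]
  exact ⟨-((t:ℤ)/N), by ring⟩

lemma shift_inj (c : ℕ) {x y : Fin N} (h : ((x:ℕ)+c) % N = ((y:ℕ)+c) % N) : x = y := by
  have h2 : (x:ℕ) % N = (y:ℕ) % N := Nat.ModEq.add_right_cancel' c h
  rw [Nat.mod_eq_of_lt x.isLt, Nat.mod_eq_of_lt y.isLt] at h2
  exact Fin.ext h2

lemma Xpow_apply (hN : 0 < N) (b : ℕ) (x y : Fin N) :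
    (shiftX N ^ b) x y = if (x:ℕ) = ((y:ℕ) + b) % N then 1 else 0 := by
  induction b generalizing x y with
  | zero =>
    rw [pow_zero, Matrix.one_apply]
    congr 1
    simp [Fin.ext_iff, Nat.mod_eq_of_lt y.isLt]
  | succ b ih =>
    rw [pow_succ, Matrix.mul_apply]
    have hm0lt : ((y:ℕ)+1) % N < N := Nat.mod_lt _ hN
    set m₀ : Fin N := ⟨((y:ℕ)+1) % N, hm0lt⟩ with hm₀
    have hX : ∀ m : Fin N, shiftX N m y = if m = m₀ then 1 else 0 := by
      intro m
      have hiff : ((m:ℕ) = ((y:ℕ)+1) % N) ↔ m = m₀ := by rw [Fin.ext_iff]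
      rw [shiftX, Matrix.of_apply, if_congr hiff rfl rfl]
    simp_rw [hX, mul_ite, mul_one, mul_zero, Finset.sum_ite_eq' Finset.univ m₀,
      if_pos (Finset.mem_univ m₀)]
    rw [ih]
    have hcond : ((m₀:ℕ) + b) % N = ((y:ℕ) + (b+1)) % N := by
      show (((y:ℕ)+1) % N + b) % N = _
      rw [Nat.mod_add_mod]
      congr 1
      omega
    rw [hcond]

lemma Zpow_eq (a : ℕ) :
    clockZ N ^ a = Matrix.diagonal (fun j : Fin N => omegaN N ^ ((j:ℕ) * a)) := by
  rw [clockZ, Matrix.diagonal_pow]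
  have h : (fun j : Fin N => omegaN N ^ (j:ℕ)) ^ a = fun j : Fin N => omegaN N ^ ((j:ℕ)*a) := by
    funext j; simp [pow_mul]
  rw [h]

lemma U_apply (hN : 0 < N) (a b : ℕ) (x y : Fin N) :
    Umat N a b x y = if (x:ℕ) = ((y:ℕ) + b) % N then omegaN N ^ ((x:ℕ) * a) else 0 := by
  rw [Umat, Zpow_eq, Matrix.diagonal_mul, Xpow_apply hN, mul_ite, mul_one, mul_zero]

lemma X_mem (hN : 0 < N) : shiftX N ∈ unitary (Matrix (Fin N) (Fin N) ℂ) := by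
  rw [Unitary.mem_iff]
  have h1 : star (shiftX N) * shiftX N = 1 := by
    ext x y
    rw [Matrix.star_eq_conjTranspose, Matrix.mul_apply, Matrix.one_apply]
    have hx : ((x:ℕ)+1) % N < N := Nat.mod_lt _ hN
    have hy : ((y:ℕ)+1) % N < N := Nat.mod_lt _ hN
    set mx : Fin N := ⟨((x:ℕ)+1) % N, hx⟩
    set my : Fin N := ⟨((y:ℕ)+1) % N, hy⟩
    have hXx : ∀ m : Fin N, (shiftX N)ᴴ x m = if m = mx then 1 else 0 := by
      intro m
      have hiff : ((m:ℕ) = ((x:ℕ)+1) % N) ↔ m = mx := by rw [Fin.ext_iff]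
      rw [Matrix.conjTranspose_apply, shiftX, Matrix.of_apply, if_congr hiff rfl rfl]
      simp
    have hXy : ∀ m : Fin N, shiftX N m y = if m = my then 1 else 0 := by
      intro m
      have hiff : ((m:ℕ) = ((y:ℕ)+1) % N) ↔ m = my := by rw [Fin.ext_iff]
      rw [shiftX, Matrix.of_apply, if_congr hiff rfl rfl]
    simp_rw [hXx, hXy, ite_mul, one_mul, zero_mul]
    rw [Finset.sum_ite_eq' Finset.univ mx (fun m => if m = my then (1:ℂ) else 0),
      if_pos (Finset.mem_univ mx)]
    have hiff : (mx = my) ↔ x = y := by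
      constructor
      · intro h; exact shift_inj 1 (by simpa [Fin.ext_iff] using h)
      · intro h; subst h; rfl
    rw [if_congr hiff rfl rfl]
  exact ⟨h1, mul_eq_one_comm.mp h1⟩

lemma Z_mem (hN : 0 < N) : clockZ N ∈ unitary (Matrix (Fin N) (Fin N) ℂ) := by
  rw [Unitary.mem_iff]
  have h1 : star (clockZ N) * clockZ N = 1 := by
    rw [Matrix.star_eq_conjTranspose, clockZ, Matrix.diagonal_conjTranspose,
      Matrix.diagonal_mul_diagonal, ← Matrix.diagonal_one]
    have h : (fun i : Fin N => star (fun j : Fin N => omegaN N ^ (j:ℕ)) i * omegaN N ^ (i:ℕ))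
        = fun _ : Fin N => (1:ℂ) := by
      funext j
      rw [Pi.star_apply, RCLike.star_def, ← zpow_natCast (omegaN N) (j:ℕ), omega_conj,
        ← zpow_add₀ (omega_ne N)]
      simp
    rw [h]
  exact ⟨h1, mul_eq_one_comm.mp h1⟩

lemma U_mem (hN : 0 < N) (a b : ℕ) : Umat N a b ∈ unitary (Matrix (Fin N) (Fin N) ℂ) :=
  mul_mem (pow_mem (Z_mem hN) a) (pow_mem (X_mem hN) b)

lemma U_unit1 (hN : 0 < N) (a b : ℕ) : (Umat N a b)ᴴ * Umat N a b = 1 := by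
  have := ((Unitary.mem_iff).mp (U_mem hN a b)).1
  rwa [Matrix.star_eq_conjTranspose] at this

lemma comm_phase (hN : 0 < N) (j n a b : Fin N) :
    Umat N (j:ℕ) (n:ℕ) * Umat N (a:ℕ) (b:ℕ)
      = omegaN N ^ ((j:ℤ)*(b:ℤ) - (a:ℤ)*(n:ℤ)) • (Umat N (a:ℕ) (b:ℕ) * Umat N (j:ℕ) (n:ℕ)) := by
  ext x y
  rw [Matrix.smul_apply, Matrix.mul_apply, Matrix.mul_apply]
  have h0 : ((y:ℕ)+(b:ℕ)) % N < N := Nat.mod_lt _ hN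
  have h1 : ((y:ℕ)+(n:ℕ)) % N < N := Nat.mod_lt _ hN
  set m₀ : Fin N := ⟨((y:ℕ)+(b:ℕ)) % N, h0⟩ with hm₀
  set m₁ : Fin N := ⟨((y:ℕ)+(n:ℕ)) % N, h1⟩ with hm₁
  have hUb : ∀ m : Fin N, Umat N (a:ℕ) (b:ℕ) m y
      = if m = m₀ then omegaN N ^ ((m:ℕ)*(a:ℕ)) else 0 := by
    intro m
    rw [U_apply hN]
    exact if_congr (by rw [Fin.ext_iff]) rfl rfl
  have hUn : ∀ m : Fin N, Umat N (j:ℕ) (n:ℕ) m y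
      = if m = m₁ then omegaN N ^ ((m:ℕ)*(j:ℕ)) else 0 := by
    intro m
    rw [U_apply hN]
    exact if_congr (by rw [Fin.ext_iff]) rfl rfl
  simp_rw [hUb, hUn, mul_ite, mul_zero]
  rw [Finset.sum_ite_eq' Finset.univ m₀, Finset.sum_ite_eq' Finset.univ m₁,
    if_pos (Finset.mem_univ m₀), if_pos (Finset.mem_univ m₁)]
  rw [U_apply hN, U_apply hN]
  have hc0 : ((m₀:ℕ) + (n:ℕ)) % N = ((y:ℕ)+(b:ℕ)+(n:ℕ)) % N := by
    show (((y:ℕ)+(b:ℕ)) % N + (n:ℕ)) % N = _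
    rw [Nat.mod_add_mod]
  have hc1 : ((m₁:ℕ) + (b:ℕ)) % N = ((y:ℕ)+(b:ℕ)+(n:ℕ)) % N := by
    show (((y:ℕ)+(n:ℕ)) % N + (b:ℕ)) % N = _
    rw [Nat.mod_add_mod]
    congr 1
    omega
  rw [hc0, hc1]
  split_ifs with hx
  · rw [smul_eq_mul]
    obtain ⟨α, hα⟩ := mod_dvd (N := N) ((y:ℕ)+(b:ℕ))
    obtain ⟨γ, hγ⟩ := mod_dvd (N := N) ((y:ℕ)+(n:ℕ))
    have dx : (N:ℤ) ∣ ((x:ℕ):ℤ) - ((((y:ℕ)+(b:ℕ)+(n:ℕ)) : ℕ) : ℤ) := by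
      have h := mod_dvd (N := N) ((y:ℕ)+(b:ℕ)+(n:ℕ))
      rw [← hx] at h
      exact h
    obtain ⟨δ, hδ⟩ := dx
    rw [← zpow_natCast (omegaN N) ((x:ℕ)*(j:ℕ)), ← zpow_natCast (omegaN N) ((m₀:ℕ)*(a:ℕ)),
      ← zpow_natCast (omegaN N) ((x:ℕ)*(a:ℕ)), ← zpow_natCast (omegaN N) ((m₁:ℕ)*(j:ℕ)),
      ← zpow_add₀ (omega_ne N), ← zpow_add₀ (omega_ne N), ← zpow_add₀ (omega_ne N)]
    apply omega_per hN
    refine ⟨δ*(j:ℤ) + α*(a:ℤ) - δ*(a:ℤ) - γ*(j:ℤ), ?_⟩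
    have e0 : ((m₀:ℕ):ℤ) = ((((y:ℕ)+(b:ℕ)) % N : ℕ):ℤ) := rfl
    have e1 : ((m₁:ℕ):ℤ) = ((((y:ℕ)+(n:ℕ)) % N : ℕ):ℤ) := rfl
    push_cast at hα hγ hδ e0 e1 ⊢
    linear_combination ((j:ℕ):ℤ)*hδ + ((a:ℕ):ℤ)*hα - ((a:ℕ):ℤ)*hδ - ((j:ℕ):ℤ)*hγ + ((a:ℕ):ℤ)*e0 - ((j:ℕ):ℤ)*e1
  · simp

lemma conj_smul (hN : 0 < N) (a b j n : Fin N) :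
    (Umat N (a:ℕ) (b:ℕ))ᴴ * ((Umat N (j:ℕ) (n:ℕ))ᴴ * Umat N (a:ℕ) (b:ℕ))
      = omegaN N ^ ((a:ℤ)*(n:ℤ) - (j:ℤ)*(b:ℤ)) • (Umat N (j:ℕ) (n:ℕ))ᴴ := by
  have h1 : (Umat N (a:ℕ) (b:ℕ))ᴴ * Umat N (j:ℕ) (n:ℕ) * Umat N (a:ℕ) (b:ℕ)
      = omegaN N ^ ((j:ℤ)*(b:ℤ) - (a:ℤ)*(n:ℤ)) • Umat N (j:ℕ) (n:ℕ) := by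
    calc (Umat N (a:ℕ) (b:ℕ))ᴴ * Umat N (j:ℕ) (n:ℕ) * Umat N (a:ℕ) (b:ℕ)
        = (Umat N (a:ℕ) (b:ℕ))ᴴ * (Umat N (j:ℕ) (n:ℕ) * Umat N (a:ℕ) (b:ℕ)) := by
          rw [mul_assoc]
      _ = (Umat N (a:ℕ) (b:ℕ))ᴴ * (omegaN N ^ ((j:ℤ)*(b:ℤ) - (a:ℤ)*(n:ℤ)) •
            (Umat N (a:ℕ) (b:ℕ) * Umat N (j:ℕ) (n:ℕ))) := by rw [comm_phase hN]
      _ = omegaN N ^ ((j:ℤ)*(b:ℤ) - (a:ℤ)*(n:ℤ)) •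
            ((Umat N (a:ℕ) (b:ℕ))ᴴ * Umat N (a:ℕ) (b:ℕ) * Umat N (j:ℕ) (n:ℕ)) := by
          rw [Matrix.mul_smul, mul_assoc]
      _ = omegaN N ^ ((j:ℤ)*(b:ℤ) - (a:ℤ)*(n:ℤ)) • Umat N (j:ℕ) (n:ℕ) := by
          rw [U_unit1 hN, one_mul]
  have h2 := congrArg Matrix.conjTranspose h1
  simp only [Matrix.conjTranspose_mul, Matrix.conjTranspose_conjTranspose,
    Matrix.conjTranspose_smul, RCLike.star_def, omega_conj, neg_sub, mul_assoc] at h2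
  exact h2

lemma trace_conj (hN : 0 < N) (a b j n : Fin N) (W : Matrix (Fin N) (Fin N) ℂ) :
    Matrix.trace ((Umat N (j:ℕ) (n:ℕ))ᴴ * (Umat N (a:ℕ) (b:ℕ) * W * (Umat N (a:ℕ) (b:ℕ))ᴴ))
      = omegaN N ^ ((a:ℤ)*(n:ℤ) - (j:ℤ)*(b:ℤ)) *
          Matrix.trace ((Umat N (j:ℕ) (n:ℕ))ᴴ * W) := by
  have e1 : (Umat N (j:ℕ) (n:ℕ))ᴴ * (Umat N (a:ℕ) (b:ℕ) * W * (Umat N (a:ℕ) (b:ℕ))ᴴ)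
      = ((Umat N (j:ℕ) (n:ℕ))ᴴ * (Umat N (a:ℕ) (b:ℕ) * W)) * (Umat N (a:ℕ) (b:ℕ))ᴴ := by
    rw [← mul_assoc, ← mul_assoc]
  rw [e1, Matrix.trace_mul_comm]
  have e2 : (Umat N (a:ℕ) (b:ℕ))ᴴ * ((Umat N (j:ℕ) (n:ℕ))ᴴ * (Umat N (a:ℕ) (b:ℕ) * W))
      = ((Umat N (a:ℕ) (b:ℕ))ᴴ * ((Umat N (j:ℕ) (n:ℕ))ᴴ * Umat N (a:ℕ) (b:ℕ))) * W := by
    rw [mul_assoc, mul_assoc]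
  rw [e2, conj_smul hN, Matrix.smul_mul, Matrix.trace_smul, smul_eq_mul]

lemma dvd_small_eq {n : ℕ} {a b : ℤ} (h : (n:ℤ) ∣ a - b) (ha : 0 ≤ a) (ha2 : a < n)
    (hb : 0 ≤ b) (hb2 : b < n) : a = b := by
  obtain ⟨q, hq⟩ := h
  have hq0 : q = 0 := by
    by_contra hq0
    rcases lt_or_gt_of_ne hq0 with h' | h'
    · have h2 : (n:ℤ) * q ≤ n * (-1) := by
        apply mul_le_mul_of_nonneg_left (by omega) (by positivity)
      linarith
    · have h2 : (n:ℤ) * 1 ≤ n * q := by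
        apply mul_le_mul_of_nonneg_left (by omega) (by positivity)
      linarith
  rw [hq0, mul_zero] at hq
  omega

lemma trace_expand (hN : 0 < N) (M : Matrix (Fin N) (Fin N) ℂ) (jj nn : Fin N) :
    Matrix.trace ((Umat N (jj:ℕ) (nn:ℕ))ᴴ * M)
      = ∑ i : Fin N,
          (starRingEnd ℂ) (omegaN N ^ (((i+nn : Fin N):ℕ) * (jj:ℕ))) * M (i+nn) i := by
  rw [Matrix.trace]
  simp only [Matrix.diag_apply, Matrix.mul_apply, Matrix.conjTranspose_apply]
  refine Finset.sum_congr rfl fun i _ => ?_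
  have hU : ∀ m : Fin N, Umat N (jj:ℕ) (nn:ℕ) m i
      = if m = i + nn then omegaN N ^ ((m:ℕ)*(jj:ℕ)) else 0 := by
    intro m
    rw [U_apply hN]
    refine if_congr ?_ rfl rfl
    rw [Fin.ext_iff, Fin.val_add]
  simp_rw [hU, apply_ite (star : ℂ → ℂ), star_zero, ite_mul, zero_mul]
  rw [Finset.sum_ite_eq' Finset.univ (i+nn), if_pos (Finset.mem_univ _)]
  rfl

lemma parseval (hN : 0 < N) (A B : Matrix (Fin N) (Fin N) ℂ) :
    ∑ jj : Fin N, ∑ nn : Fin N,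
      Matrix.trace ((Umat N (jj:ℕ) (nn:ℕ))ᴴ * A) *
        (starRingEnd ℂ) (Matrix.trace ((Umat N (jj:ℕ) (nn:ℕ))ᴴ * B))
      = N * Matrix.trace (A * Bᴴ) := by
  haveI : NeZero N := ⟨hN.ne'⟩
  simp_rw [trace_expand hN, _root_.map_sum, _root_.map_mul, starRingEnd_self_apply,
    Finset.sum_mul_sum]
  rw [Finset.sum_comm]
  have step : ∀ nn : Fin N,
      (∑ jj : Fin N, ∑ i : Fin N, ∑ i' : Fin N,
        ((starRingEnd ℂ) (omegaN N ^ (((i+nn : Fin N):ℕ) * (jj:ℕ))) * A (i+nn) i) *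
          (omegaN N ^ (((i'+nn : Fin N):ℕ) * (jj:ℕ)) * (starRingEnd ℂ) (B (i'+nn) i')))
        = ∑ i : Fin N, (A (i+nn) i * (starRingEnd ℂ) (B (i+nn) i)) * N := by
    intro nn
    rw [Finset.sum_comm]
    refine Finset.sum_congr rfl fun i _ => ?_
    rw [Finset.sum_comm]
    have inner : ∀ i' : Fin N,
        (∑ jj : Fin N,
          ((starRingEnd ℂ) (omegaN N ^ (((i+nn : Fin N):ℕ) * (jj:ℕ))) * A (i+nn) i) *
            (omegaN N ^ (((i'+nn : Fin N):ℕ) * (jj:ℕ)) * (starRingEnd ℂ) (B (i'+nn) i')))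
          = if i' = i then (A (i+nn) i * (starRingEnd ℂ) (B (i'+nn) i')) * N else 0 := by
      intro i'
      have hterm : ∀ jj : Fin N,
          ((starRingEnd ℂ) (omegaN N ^ (((i+nn : Fin N):ℕ) * (jj:ℕ))) * A (i+nn) i) *
            (omegaN N ^ (((i'+nn : Fin N):ℕ) * (jj:ℕ)) * (starRingEnd ℂ) (B (i'+nn) i'))
          = (A (i+nn) i * (starRingEnd ℂ) (B (i'+nn) i')) *
              omegaN N ^ (((((i'+nn : Fin N):ℕ):ℤ) - (((i+nn : Fin N):ℕ):ℤ)) * ((jj:ℕ):ℤ)) := by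
        intro jj
        have hxy : (starRingEnd ℂ) (omegaN N ^ (((i+nn : Fin N):ℕ) * (jj:ℕ))) *
            omegaN N ^ (((i'+nn : Fin N):ℕ) * (jj:ℕ))
            = omegaN N ^ (((((i'+nn : Fin N):ℕ):ℤ) - (((i+nn : Fin N):ℕ):ℤ)) * ((jj:ℕ):ℤ)) := by
          rw [← zpow_natCast (omegaN N) (((i+nn : Fin N):ℕ) * (jj:ℕ)), omega_conj,
            ← zpow_natCast (omegaN N) (((i'+nn : Fin N):ℕ) * (jj:ℕ)),
            ← zpow_add₀ (omega_ne N)]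
          congr 1
          push_cast
          ring
        calc ((starRingEnd ℂ) (omegaN N ^ (((i+nn : Fin N):ℕ) * (jj:ℕ))) * A (i+nn) i) *
            (omegaN N ^ (((i'+nn : Fin N):ℕ) * (jj:ℕ)) * (starRingEnd ℂ) (B (i'+nn) i'))
            = (A (i+nn) i * (starRingEnd ℂ) (B (i'+nn) i')) *
                ((starRingEnd ℂ) (omegaN N ^ (((i+nn : Fin N):ℕ) * (jj:ℕ))) *
                  omegaN N ^ (((i'+nn : Fin N):ℕ) * (jj:ℕ))) := by ring
          _ = _ := by rw [hxy]
      rw [Finset.sum_congr rfl fun jj _ => hterm jj, ← Finset.mul_sum,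
        geom hN ((((i'+nn : Fin N):ℕ):ℤ) - (((i+nn : Fin N):ℕ):ℤ))]
      have hiff : ((N:ℤ) ∣ ((((i'+nn : Fin N):ℕ):ℤ) - (((i+nn : Fin N):ℕ):ℤ))) ↔ i' = i := by
        constructor
        · intro h
          have := dvd_small_eq h (by positivity) (by exact_mod_cast (i'+nn).isLt)
            (by positivity) (by exact_mod_cast (i+nn).isLt)
          have h2 : (i'+nn : Fin N) = (i+nn : Fin N) := Fin.ext (by exact_mod_cast this)
          exact add_right_cancel h2
        · intro h
          rw [h, sub_self]
          exact dvd_zero _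
      rw [if_congr hiff rfl rfl]
      split_ifs with h
      · rfl
      · rw [mul_zero]
    rw [Finset.sum_congr rfl fun i' _ => inner i',
      Finset.sum_ite_eq' Finset.univ i
        (fun i' => (A (i+nn) i * (starRingEnd ℂ) (B (i'+nn) i')) * N),
      if_pos (Finset.mem_univ i)]
  rw [Finset.sum_congr rfl fun nn _ => step nn, Finset.sum_comm]
  have reindex : ∀ i : Fin N,
      (∑ nn : Fin N, (A (i+nn) i * (starRingEnd ℂ) (B (i+nn) i)) * N)
        = ∑ m : Fin N, (A m i * (starRingEnd ℂ) (B m i)) * N := by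
    intro i
    exact Fintype.sum_equiv (Equiv.addLeft i)
      (fun nn => (A (i+nn) i * (starRingEnd ℂ) (B (i+nn) i)) * N)
      (fun m => (A m i * (starRingEnd ℂ) (B m i)) * N)
      (fun nn => rfl)
  rw [Finset.sum_congr rfl fun i _ => reindex i]
  rw [Matrix.trace]
  simp only [Matrix.diag_apply, Matrix.mul_apply, Matrix.conjTranspose_apply]
  rw [Finset.mul_sum, Finset.sum_comm]
  refine Finset.sum_congr rfl fun i _ => ?_
  rw [Finset.mul_sum]
  refine Finset.sum_congr rfl fun m _ => ?_
  rw [RCLike.star_def]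
  ring

lemma fin_sub_dvd (hN : 0 < N) (x y : Fin N) :
    (N:ℤ) ∣ (((x - y : Fin N):ℕ):ℤ) - (((x:ℕ):ℤ) - ((y:ℕ):ℤ)) := by
  have h2 : (((x - y : Fin N):ℕ):ℤ) = (((N - (y:ℕ) + (x:ℕ)) % N : ℕ):ℤ) := by
    rw [Fin.sub_def]
  obtain ⟨q, hq⟩ := mod_dvd (N := N) (N - (y:ℕ) + (x:ℕ))
  have h3 : ((N - (y:ℕ) + (x:ℕ) : ℕ) : ℤ) = (N:ℤ) - ((y:ℕ):ℤ) + ((x:ℕ):ℤ) := by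
    push_cast [Nat.cast_sub y.isLt.le]
    ring
  refine ⟨q + 1, ?_⟩
  rw [h2]
  rw [h3] at hq
  linarith

lemma sum_sub_reindex (hN : 0 < N) (F : ℤ → ℤ → ℝ)
    (hF : ∀ u u' v v' : ℤ, (N:ℤ) ∣ u - u' → (N:ℤ) ∣ v - v' → F u v = F u' v') :
    ∑ a : Fin N, ∑ b : Fin N, ∑ c : Fin N, ∑ d : Fin N,
        F (((a:ℕ):ℤ) - ((c:ℕ):ℤ)) (((b:ℕ):ℤ) - ((d:ℕ):ℤ))
      = (N:ℝ)^2 * ∑ a : Fin N, ∑ b : Fin N, F ((a:ℕ):ℤ) ((b:ℕ):ℤ) := by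
  haveI : NeZero N := ⟨hN.ne'⟩
  have key : ∀ (u : Fin N) (g : ℤ → ℝ)
      (hg : ∀ s s' : ℤ, (N:ℤ) ∣ s - s' → g s = g s'),
      (∑ c : Fin N, g (((u:ℕ):ℤ) - ((c:ℕ):ℤ))) = ∑ c : Fin N, g ((c:ℕ):ℤ) := by
    intro u g hg
    refine (Fintype.sum_equiv (Equiv.subLeft u) (fun c => g ((c:ℕ):ℤ))
      (fun c => g (((u:ℕ):ℤ) - ((c:ℕ):ℤ))) fun c => ?_).symm
    show g ((c:ℕ):ℤ) = g (((u:ℕ):ℤ) - (((u - c : Fin N):ℕ):ℤ))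
    refine hg _ _ ?_
    have := fin_sub_dvd hN u c
    obtain ⟨q, hq⟩ := this
    exact ⟨q, by linarith⟩
  have inner : ∀ a b : Fin N,
      (∑ c : Fin N, ∑ d : Fin N, F (((a:ℕ):ℤ) - ((c:ℕ):ℤ)) (((b:ℕ):ℤ) - ((d:ℕ):ℤ)))
        = ∑ c : Fin N, ∑ d : Fin N, F ((c:ℕ):ℤ) ((d:ℕ):ℤ) := by
    intro a b
    rw [key a (fun s => ∑ d : Fin N, F s (((b:ℕ):ℤ) - ((d:ℕ):ℤ)))
      (fun s s' hs => Finset.sum_congr rfl fun d _ => hF _ _ _ _ hs (by simp))]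
    refine Finset.sum_congr rfl fun c _ => ?_
    exact key b (fun s => F ((c:ℕ):ℤ) s) (fun s s' hs => hF _ _ _ _ (by simp) hs)
  calc ∑ a : Fin N, ∑ b : Fin N, ∑ c : Fin N, ∑ d : Fin N,
        F (((a:ℕ):ℤ) - ((c:ℕ):ℤ)) (((b:ℕ):ℤ) - ((d:ℕ):ℤ))
      = ∑ _a : Fin N, ∑ _b : Fin N, ∑ c : Fin N, ∑ d : Fin N, F ((c:ℕ):ℤ) ((d:ℕ):ℤ) := by
        exact Finset.sum_congr rfl fun a _ => Finset.sum_congr rfl fun b _ => inner a b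
    _ = (N:ℝ)^2 * ∑ a : Fin N, ∑ b : Fin N, F ((a:ℕ):ℤ) ((b:ℕ):ℤ) := by
        rw [Finset.sum_const, Finset.sum_const]
        simp [Finset.card_univ, nsmul_eq_mul]
        ring

end FPaux

open FPaux in
/-- The k-frame potential of the conjugation family `{D_{a,b} W D_{a,b}†}` reduces to a
Fourier-type sum over the coefficient magnitudes `p_{j,n} = |w_{j,n}|²`. -/
theorem frame_potential_conjugation_family (N : ℕ) (hN : 0 < N)
    (W : Matrix (Fin N) (Fin N) ℂ) (k : ℕ) (hk : 0 < k)
    (w : Fin N → Fin N → ℂ)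
    (hw : ∀ j n : Fin N, w j n = (1 / (Real.sqrt N : ℂ)) *
        Matrix.trace ((dispD N ((j : ℕ) : ℤ) ((n : ℕ) : ℤ))ᴴ * W))
    (p : Fin N → Fin N → ℝ)
    (hp : ∀ j n : Fin N, p j n = Norm.norm (w j n) ^ 2) :
    (1 / (N : ℝ) ^ 4) *
      ∑ a : Fin N, ∑ b : Fin N, ∑ c : Fin N, ∑ d : Fin N,
        Norm.norm (Matrix.trace
          (dispD N ((a : ℕ) : ℤ) ((b : ℕ) : ℤ) * W * (dispD N ((a : ℕ) : ℤ) ((b : ℕ) : ℤ))ᴴ *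
            (dispD N ((c : ℕ) : ℤ) ((d : ℕ) : ℤ) * W *
              (dispD N ((c : ℕ) : ℤ) ((d : ℕ) : ℤ))ᴴ)ᴴ)) ^ (2 * k)
    =
    (1 / (N : ℝ) ^ 2) *
      ∑ a : Fin N, ∑ b : Fin N,
        Norm.norm (∑ j : Fin N, ∑ n : Fin N,
          (p j n : ℂ) *
            omegaN N ^ (((a : ℕ) : ℤ) * ((n : ℕ) : ℤ) - ((b : ℕ) : ℤ) * ((j : ℕ) : ℤ))) ^ (2 * k) := by
  haveI : NeZero N := ⟨hN.ne'⟩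
  have hNC : (N:ℂ) ≠ 0 := Nat.cast_ne_zero.mpr hN.ne'
  have hNR : (N:ℝ) ≠ 0 := Nat.cast_ne_zero.mpr hN.ne'
  have hdisp : ∀ a b : Fin N, dispD N ((a:ℕ):ℤ) ((b:ℕ):ℤ)
      = Complex.exp (-(Real.pi * Complex.I * (((a:ℕ):ℤ):ℂ) * (((b:ℕ):ℤ):ℂ)) / N) •
          Umat N (a:ℕ) (b:ℕ) := by
    intro a b
    rw [dispD, Umat, zpow_natCast, zpow_natCast]
  have hphase : ∀ a b : Fin N,
      star (Complex.exp (-(Real.pi * Complex.I * (((a:ℕ):ℤ):ℂ) * (((b:ℕ):ℤ):ℂ)) / N)) *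
        Complex.exp (-(Real.pi * Complex.I * (((a:ℕ):ℤ):ℂ) * (((b:ℕ):ℤ):ℂ)) / N) = 1 := by
    intro a b
    rw [RCLike.star_def, ← Complex.exp_conj, ← Complex.exp_add]
    have hz : (starRingEnd ℂ) (-(Real.pi * Complex.I * (((a:ℕ):ℤ):ℂ) * (((b:ℕ):ℤ):ℂ)) / N)
        = -(-(Real.pi * Complex.I * (((a:ℕ):ℤ):ℂ) * (((b:ℕ):ℤ):ℂ)) / N) := by
      simp [map_div₀, Complex.conj_I]
      push_cast
      ring
    rw [hz, neg_add_cancel, Complex.exp_zero]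
  have hDW : ∀ a b : Fin N,
      dispD N ((a:ℕ):ℤ) ((b:ℕ):ℤ) * W * (dispD N ((a:ℕ):ℤ) ((b:ℕ):ℤ))ᴴ
        = Umat N (a:ℕ) (b:ℕ) * W * (Umat N (a:ℕ) (b:ℕ))ᴴ := by
    intro a b
    rw [hdisp a b]
    simp only [Matrix.conjTranspose_smul, Matrix.smul_mul, Matrix.mul_smul, smul_smul]
    rw [hphase a b, one_smul]
  have hpT : ∀ j n : Fin N, ((p j n : ℂ)) * N
      = Matrix.trace ((Umat N (j:ℕ) (n:ℕ))ᴴ * W) *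
          (starRingEnd ℂ) (Matrix.trace ((Umat N (j:ℕ) (n:ℕ))ᴴ * W)) := by
    intro j n
    set T := Matrix.trace ((Umat N (j:ℕ) (n:ℕ))ᴴ * W) with hT
    have hw2 : w j n = (1/(Real.sqrt N : ℂ)) *
        (star (Complex.exp (-(Real.pi * Complex.I * (((j:ℕ):ℤ):ℂ) * (((n:ℕ):ℤ):ℂ)) / N)) * T) := by
      rw [hw j n, hdisp j n, Matrix.conjTranspose_smul, Matrix.smul_mul, Matrix.trace_smul,
        smul_eq_mul]
    have habsph : Norm.norm
        (star (Complex.exp (-(Real.pi * Complex.I * (((j:ℕ):ℤ):ℂ) * (((n:ℕ):ℤ):ℂ)) / N))) = 1 := by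
      rw [RCLike.star_def, Complex.norm_conj]
      have hform : -(Real.pi * Complex.I * (((j:ℕ):ℤ):ℂ) * (((n:ℕ):ℤ):ℂ)) / N
          = ((-(Real.pi * (j:ℕ) * (n:ℕ)) / N : ℝ) : ℂ) * Complex.I := by
        push_cast
        ring
      rw [hform, Complex.norm_exp_ofReal_mul_I]
    have habsw : Norm.norm (w j n) = (1/Real.sqrt N) * Norm.norm T := by
      rw [hw2, norm_mul, norm_mul, habsph, one_mul, norm_div, norm_one, Complex.norm_real, Real.norm_eq_abs,
        _root_.abs_of_nonneg (Real.sqrt_nonneg _)]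
    have hreal : p j n * (N:ℝ) = Norm.norm T ^ 2 := by
      rw [hp j n, habsw]
      have h1 : Real.sqrt N ^ 2 = N := Real.sq_sqrt (Nat.cast_nonneg N)
      have h2 : Real.sqrt N ≠ 0 := by
        have : (0:ℝ) < N := by positivity
        positivity
      rw [mul_pow, one_div, inv_pow, h1]
      field_simp
    calc ((p j n : ℂ)) * N = ((p j n * N : ℝ) : ℂ) := by push_cast; ring
      _ = ((Norm.norm T ^ 2 : ℝ) : ℂ) := by rw [hreal]
      _ = T * (starRingEnd ℂ) T := by rw [Complex.sq_norm, Complex.mul_conj]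
  have htr : ∀ a b c d : Fin N,
      Matrix.trace (Umat N (a:ℕ) (b:ℕ) * W * (Umat N (a:ℕ) (b:ℕ))ᴴ *
          (Umat N (c:ℕ) (d:ℕ) * W * (Umat N (c:ℕ) (d:ℕ))ᴴ)ᴴ)
        = ∑ j : Fin N, ∑ n : Fin N, (p j n : ℂ) *
            omegaN N ^ ((((a:ℕ):ℤ) - ((c:ℕ):ℤ)) * ((n:ℕ):ℤ) -
              (((b:ℕ):ℤ) - ((d:ℕ):ℤ)) * ((j:ℕ):ℤ)) := by
    intro a b c d
    apply mul_left_cancel₀ hNC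
    rw [← parseval hN]
    rw [Finset.mul_sum]
    refine Finset.sum_congr rfl fun j _ => ?_
    rw [Finset.mul_sum]
    refine Finset.sum_congr rfl fun n _ => ?_
    rw [trace_conj hN a b j n W, trace_conj hN c d j n W, _root_.map_mul, omega_conj]
    set T := Matrix.trace ((Umat N (j:ℕ) (n:ℕ))ᴴ * W) with hTdef
    rw [show (omegaN N ^ ((a:ℤ)*(n:ℤ) - (j:ℤ)*(b:ℤ)) * T) *
        (omegaN N ^ (-((c:ℤ)*(n:ℤ) - (j:ℤ)*(d:ℤ))) * (starRingEnd ℂ) T)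
        = (T * (starRingEnd ℂ) T) *
            (omegaN N ^ ((a:ℤ)*(n:ℤ) - (j:ℤ)*(b:ℤ)) *
              omegaN N ^ (-((c:ℤ)*(n:ℤ) - (j:ℤ)*(d:ℤ)))) from by ring]
    rw [← hpT j n, ← zpow_add₀ (omega_ne N)]
    rw [show ((a:ℤ)*(n:ℤ) - (j:ℤ)*(b:ℤ)) + -((c:ℤ)*(n:ℤ) - (j:ℤ)*(d:ℤ))
        = (((a:ℕ):ℤ) - ((c:ℕ):ℤ)) * ((n:ℕ):ℤ) - (((b:ℕ):ℤ) - ((d:ℕ):ℤ)) * ((j:ℕ):ℤ) from by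
      push_cast; ring]
    ring
  -- rewrite the LHS summands
  have hLHS : ∀ a b c d : Fin N,
      Norm.norm (Matrix.trace
          (dispD N ((a:ℕ):ℤ) ((b:ℕ):ℤ) * W * (dispD N ((a:ℕ):ℤ) ((b:ℕ):ℤ))ᴴ *
            (dispD N ((c:ℕ):ℤ) ((d:ℕ):ℤ) * W * (dispD N ((c:ℕ):ℤ) ((d:ℕ):ℤ))ᴴ)ᴴ)) ^ (2*k)
        = Norm.norm (∑ j : Fin N, ∑ n : Fin N, (p j n : ℂ) *
            omegaN N ^ ((((a:ℕ):ℤ) - ((c:ℕ):ℤ)) * ((n:ℕ):ℤ) -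
              (((b:ℕ):ℤ) - ((d:ℕ):ℤ)) * ((j:ℕ):ℤ))) ^ (2*k) := by
    intro a b c d
    rw [hDW a b, hDW c d, htr a b c d]
  have hF : ∀ u u' v v' : ℤ, (N:ℤ) ∣ u - u' → (N:ℤ) ∣ v - v' →
      Norm.norm (∑ j : Fin N, ∑ n : Fin N, (p j n : ℂ) *
          omegaN N ^ (u * ((n:ℕ):ℤ) - v * ((j:ℕ):ℤ))) ^ (2*k)
        = Norm.norm (∑ j : Fin N, ∑ n : Fin N, (p j n : ℂ) *
          omegaN N ^ (u' * ((n:ℕ):ℤ) - v' * ((j:ℕ):ℤ))) ^ (2*k) := by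
    intro u u' v v' hu hv
    congr 2
    refine Finset.sum_congr rfl fun j _ => Finset.sum_congr rfl fun n _ => ?_
    congr 1
    apply omega_per hN
    obtain ⟨q, hq⟩ := hu
    obtain ⟨r, hr⟩ := hv
    exact ⟨q * ((n:ℕ):ℤ) - r * ((j:ℕ):ℤ), by linear_combination ((n:ℕ):ℤ) * hq - ((j:ℕ):ℤ) * hr⟩
  have e1 : (∑ a : Fin N, ∑ b : Fin N, ∑ c : Fin N, ∑ d : Fin N,
      Norm.norm (Matrix.trace
        (dispD N ((a:ℕ):ℤ) ((b:ℕ):ℤ) * W * (dispD N ((a:ℕ):ℤ) ((b:ℕ):ℤ))ᴴ *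
          (dispD N ((c:ℕ):ℤ) ((d:ℕ):ℤ) * W * (dispD N ((c:ℕ):ℤ) ((d:ℕ):ℤ))ᴴ)ᴴ)) ^ (2*k))
      = ∑ a : Fin N, ∑ b : Fin N, ∑ c : Fin N, ∑ d : Fin N,
          Norm.norm (∑ j : Fin N, ∑ n : Fin N, (p j n : ℂ) *
            omegaN N ^ ((((a:ℕ):ℤ) - ((c:ℕ):ℤ)) * ((n:ℕ):ℤ) -
              (((b:ℕ):ℤ) - ((d:ℕ):ℤ)) * ((j:ℕ):ℤ))) ^ (2*k) :=
    Finset.sum_congr rfl fun a _ => Finset.sum_congr rfl fun b _ =>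
      Finset.sum_congr rfl fun c _ => Finset.sum_congr rfl fun d _ => hLHS a b c d
  have e2 := sum_sub_reindex hN
    (fun u v => Norm.norm (∑ j : Fin N, ∑ n : Fin N, (p j n : ℂ) *
      omegaN N ^ (u * ((n:ℕ):ℤ) - v * ((j:ℕ):ℤ))) ^ (2*k)) hF
  rw [e1, e2]
  rw [show (1 / (N : ℝ) ^ 4) * ((N:ℝ)^2 * ∑ a : Fin N, ∑ b : Fin N,
      Norm.norm (∑ j : Fin N, ∑ n : Fin N, (p j n : ℂ) *
        omegaN N ^ (((a:ℕ):ℤ) * ((n:ℕ):ℤ) - ((b:ℕ):ℤ) * ((j:ℕ):ℤ))) ^ (2*k))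
      = (1 / (N : ℝ) ^ 2) * ∑ a : Fin N, ∑ b : Fin N,
      Norm.norm (∑ j : Fin N, ∑ n : Fin N, (p j n : ℂ) *
        omegaN N ^ (((a:ℕ):ℤ) * ((n:ℕ):ℤ) - ((b:ℕ):ℤ) * ((j:ℕ):ℤ))) ^ (2*k) from by
    field_simp]
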